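/- Let G be a C_5-free graph and let v be a vertex of G not contained in any triangle. Suppose uw is an edge with both u and w at distance exactly 2 from v. Then u and w have a common neighbor p at distance 1 from v, and hence p, u, w form a triangle in G. -/
import Mathlib


/-- In a `C_5`-free graph, if `v` is in no triangle and `uw` is an edge with both endpoints
at distance exactly 2 from `v`, then `u` and `w` have a common neighbor `p` at distance 1
from `v`, so `p, u, w` is a triangle. -/
theorem stmt16 {V : Type*} (G : SimpleGraph V)
    (hfree : ∀ (a : V) (c : G.Walk a a), c.IsCycle → c.length ≠ 5)
    (v : V) (hv : ∀ a b : V, G.Adj v a → G.Adj v b → ¬ G.Adj a b)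
    (u w : V) (huw : G.Adj u w) (hu : G.dist v u = 2) (hw : G.dist v w = 2) :
    ∃ p : V, G.dist v p = 1 ∧ G.Adj p u ∧ G.Adj p w := by
  obtain ⟨pu, hpu⟩ := G.exists_walk_of_dist_ne_zero (by omega : G.dist v u ≠ 0)
  obtain ⟨pw, hpw⟩ := G.exists_walk_of_dist_ne_zero (by omega : G.dist v w ≠ 0)
  rw [hu] at hpu; rw [hw] at hpw
  obtain ⟨a, hva, hau⟩ : ∃ a, G.Adj v a ∧ G.Adj a u := by
    cases pu with
    | nil => simp at hpu
    | cons h p =>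
      cases p with
      | nil => simp at hpu
      | cons h' p' =>
        simp only [SimpleGraph.Walk.length_cons] at hpu
        have : p'.length = 0 := by omega
        have := p'.eq_of_length_eq_zero this
        subst this
        exact ⟨_, h, h'⟩
  obtain ⟨b, hvb, hbw⟩ : ∃ b, G.Adj v b ∧ G.Adj b w := by
    cases pw with
    | nil => simp at hpw
    | cons h p =>
      cases p with
      | nil => simp at hpw
      | cons h' p' =>
        simp only [SimpleGraph.Walk.length_cons] at hpw
        have : p'.length = 0 := by omega
        have := p'.eq_of_length_eq_zero this
        subst this
        exact ⟨_, h, h'⟩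
  have hvu : v ≠ u := by rintro rfl; rw [SimpleGraph.dist_self] at hu; omega
  have hvw : v ≠ w := by rintro rfl; rw [SimpleGraph.dist_self] at hw; omega
  have haw : a ≠ w := by
    rintro rfl; have h1 := SimpleGraph.dist_eq_one_iff_adj.mpr hva; omega
  have hbu : b ≠ u := by
    rintro rfl; have h1 := SimpleGraph.dist_eq_one_iff_adj.mpr hvb; omega
  by_cases hab : a = b
  · subst hab
    exact ⟨a, SimpleGraph.dist_eq_one_iff_adj.mpr hva, hau, hbw⟩
  · exfalso
    have cyc : G.Walk v v :=
      .cons hva (.cons hau (.cons huw (.cons hbw.symm (.cons hvb.symm .nil))))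
    refine hfree v (.cons hva (.cons hau (.cons huw (.cons hbw.symm (.cons hvb.symm .nil))))) ?_ (by simp)
    constructor
    constructor
    · simp only [SimpleGraph.Walk.isTrail_def, SimpleGraph.Walk.edges_cons,
        SimpleGraph.Walk.edges_nil, List.nodup_cons, List.mem_cons, List.not_mem_nil,
        Sym2.eq, Sym2.rel_iff', Prod.mk.injEq, Prod.swap_prod_mk, List.nodup_nil, and_true,
        not_or]
      refine ⟨⟨?_, ?_, ?_, ?_⟩, ⟨?_, ?_, ?_⟩, ⟨?_, ?_⟩, ?_⟩ <;>
        push_neg <;>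
        aesop
    · simp
    · simp only [SimpleGraph.Walk.support_cons, SimpleGraph.Walk.support_nil, List.tail_cons,
        List.nodup_cons, List.mem_cons, List.not_mem_nil, or_false, not_or, List.nodup_nil,
        and_true]
      refine ⟨⟨?_, ?_, ?_, ?_⟩, ⟨?_, ?_, ?_⟩, ⟨?_, ?_⟩, ?_⟩ <;> aesop
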